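/- Let $\gamma_1 > 0$, $\gamma_2 < 0$, $\gamma_3 \geq 0$ with $-1/3 \leq \gamma_2/\gamma_1$, and let $u > 0$ satisfy $\gamma_1 \log(u) + \gamma_2 u + \gamma_3 \geq 0$. Then $u \leq (\gamma_1/\gamma_2)\, W_{-1}\big((\gamma_2/\gamma_1) e^{-\gamma_3/\gamma_1}\big)$. -/

import Mathlib

theorem log_linear_upper_bound (γ1 γ2 γ3 u w : ℝ) (h1 : 0 < γ1) (h2 : γ2 < 0) (h3 : 0 ≤ γ3)
    (hr : -1 / 3 ≤ γ2 / γ1) (hu : 0 < u)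
    (hpsi : 0 ≤ γ1 * Real.log u + γ2 * u + γ3)
    (hwdef : w * Real.exp w = γ2 / γ1 * Real.exp (-γ3 / γ1)) (hwm1 : w ≤ -1) :
    u ≤ γ1 / γ2 * w := by
  by_contra hcon
  push_neg at hcon
  set t := γ1 / γ2 * w with ht
  have hγ1ne : γ1 ≠ 0 := ne_of_gt h1
  have hγ2ne : γ2 ≠ 0 := ne_of_lt h2
  have ht0 : 0 < t := mul_pos_of_neg_of_neg (div_neg_of_pos_of_neg h1 h2) (by linarith)
  have hwt : w = γ2 / γ1 * t := by field_simp [ht]; rw [ht]; field_simp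
  have ha : γ2 / γ1 ≠ 0 := div_ne_zero hγ2ne hγ1ne
  have key : t * Real.exp (γ2 / γ1 * t) = Real.exp (-γ3 / γ1) := by
    have h := hwdef
    rw [hwt] at h
    have h' : γ2 / γ1 * (t * Real.exp (γ2 / γ1 * t)) = γ2 / γ1 * Real.exp (-γ3 / γ1) := by
      rw [← h]; ring
    exact mul_left_cancel₀ ha h'
  have hlogt : Real.log t + γ2 / γ1 * t = -γ3 / γ1 := by
    have := congrArg Real.log key
    rwa [Real.log_mul (ne_of_gt ht0) (Real.exp_ne_zero _), Real.log_exp, Real.log_exp] at this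
  have hroot : γ1 * Real.log t + γ2 * t + γ3 = 0 := by
    have := congrArg (fun x => γ1 * x) hlogt
    field_simp at this
    nlinarith [this]
  have htc : γ2 * t ≤ -γ1 := by
    have : γ1 / γ2 * w ≥ γ1 / γ2 * (-1) := by
      apply mul_le_mul_of_nonpos_left hwm1 (le_of_lt (div_neg_of_pos_of_neg h1 h2))
    have h' : -(γ1 / γ2) ≤ t := by rw [ht]; linarith
    have h2' : γ2 * t ≤ γ2 * (-(γ1 / γ2)) := mul_le_mul_of_nonpos_left h' h2.le
    have h3' : γ2 * (-(γ1 / γ2)) = -γ1 := by field_simp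
    linarith
  have hloglt : Real.log (u / t) < u / t - 1 :=
    Real.log_lt_sub_one_of_pos (div_pos hu ht0) (by
      intro h
      have : u = t := by field_simp at h; linarith
      linarith)
  have hlogsub : Real.log (u / t) = Real.log u - Real.log t := Real.log_div (ne_of_gt hu) (ne_of_gt ht0)
  rw [hlogsub] at hloglt
  have h5 : t * (Real.log u - Real.log t) < u - t := by
    have := (mul_lt_mul_iff_right₀ ht0).mpr hloglt
    calc t * (Real.log u - Real.log t) < t * (u / t - 1) := this
      _ = u - t := by field_simp
  nlinarith [mul_pos ht0 (sub_pos.mpr hcon), mul_lt_mul_of_pos_left h5 h1,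
    mul_le_mul_of_nonneg_right htc (le_of_lt (sub_pos.mpr hcon))]
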